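/- Suppose T is in case 1 (k < 0 and M < m) and that a = a_{mM}, where a_{mM} = (T_m − T_M)/(e^{k t_m} − e^{k t_M}). Then b_m = b_M and the exponential I_h(t) = a·e^{kt} + b_m interpolates all the data: T_i = a·e^{k t_i} + b_m for every index i; in particular ‖T − I_h(𝔱)‖_∞ = 0 and I_h(𝔱) is the best approximation of T in F_k. -/
import Mathlib


/-- In case 1 (`k < 0` and `M < m`), if `a = a_{mM}`, then
`b_m = b_M` and the exponential `I_h(t) = a·e^{kt} + b_m` interpolates all the
data: `T_i = a·e^{k t_i} + b_m` for every `i`.  In particular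
`‖T − I_h(𝔱)‖_∞ = 0` and `I_h(𝔱)` is the best approximation of `T` in `F_k`.
The norm on `Fin n → ℝ` is the sup-norm. -/
theorem case1_interpolation_when_a_eq_amM {n : ℕ}
    (t : Fin n → ℝ) (ht : StrictMono t) (T : Fin n → ℝ)
    (k : ℝ) (hk : k < 0)
    (m M : Fin n)
    (hm_min : ∀ i, T m ≤ T i) (hm_first : ∀ i, T i = T m → m ≤ i)
    (hM_max : ∀ i, T i ≤ T M) (hM_last : ∀ i, T i = T M → i ≤ M)
    (hMm : M < m)
    (a : ℝ)
    (ha_mem :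
      (∃ i, i < m ∧ a = (T i - T m) / (Real.exp (k * t i) - Real.exp (k * t m))) ∨
      (∃ j, M < j ∧ a = (T j - T M) / (Real.exp (k * t j) - Real.exp (k * t M))))
    (ha_min :
      (∀ i, i < m → a ≤ (T i - T m) / (Real.exp (k * t i) - Real.exp (k * t m))) ∧
      (∀ j, M < j → a ≤ (T j - T M) / (Real.exp (k * t j) - Real.exp (k * t M))))
    (ha_eq : a = (T m - T M) / (Real.exp (k * t m) - Real.exp (k * t M)))
    (bm bM : ℝ)
    (hbm : bm = T m - a * Real.exp (k * t m))
    (hbM : bM = T M - a * Real.exp (k * t M)) :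
    bm = bM ∧
    (∀ i, T i = a * Real.exp (k * t i) + bm) ∧
    ‖T - (fun i => a * Real.exp (k * t i) + bm)‖ = 0 ∧
    ∀ a' b' : ℝ,
      ‖T - (fun i => a * Real.exp (k * t i) + bm)‖ ≤
        ‖T - (fun i => a' * Real.exp (k * t i) + b')‖ := by
  set E : Fin n → ℝ := fun i => Real.exp (k * t i) with hE
  -- E is strictly antitone
  have hanti : StrictAnti E := fun i j hij => by
    exact Real.exp_lt_exp.mpr (by nlinarith [ht hij])
  have hdMm : E m - E M < 0 := sub_neg.mpr (hanti hMm)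
  have haMm : a * (E m - E M) = T m - T M := by
    rw [ha_eq, div_mul_cancel₀ _ (ne_of_lt hdMm)]
  have hbmbM : bm = bM := by
    rw [hbm, hbM]; nlinarith [haMm]
  have ha0 : 0 ≤ a := by
    have h1 : T m - T M ≤ 0 := by linarith [hm_min M]
    nlinarith [haMm]
  -- lower bounds for i < m
  have hle : ∀ i, i < m → a * E i + bm ≤ T i := by
    intro i him
    have hd : 0 < E i - E m := sub_pos.mpr (hanti him)
    have := (le_div_iff₀ hd).mp (ha_min.1 i him)
    rw [hbm]; nlinarith
  -- upper bounds for j > M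
  have hge : ∀ j, M < j → T j ≤ a * E j + bm := by
    intro j hMj
    have hd : E j - E M < 0 := sub_neg.mpr (hanti hMj)
    have := (le_div_iff_of_neg hd).mp (ha_min.2 j hMj)
    rw [hbmbM, hbM]; nlinarith
  have hIm : a * E m + bm = T m := by rw [hbm]; ring
  have hIM : a * E M + bm = T M := by rw [hbmbM, hbM]; ring
  have hinterp : ∀ i, T i = a * E i + bm := by
    intro i
    rcases lt_trichotomy i M with hiM | hiM | hiM
    · -- i < M < m : f(t_i) ≤ T_i and T_i ≤ T_M ≤ f(t_i)
      have h1 := hle i (hiM.trans hMm)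
      have h2 : E M ≤ E i := le_of_lt (hanti hiM)
      have h3 : a * E M ≤ a * E i := mul_le_mul_of_nonneg_left h2 ha0
      have := hM_max i
      linarith
    · subst hiM; exact hIM.symm
    · rcases lt_trichotomy i m with him | him | him
      · linarith [hle i him, hge i hiM]
      · subst him; exact hIm.symm
      · have h1 := hge i hiM
        have h2 : E i ≤ E m := le_of_lt (hanti him)
        have h3 : a * E i ≤ a * E m := mul_le_mul_of_nonneg_left h2 ha0
        have := hm_min i
        linarith
  refine ⟨hbmbM, hinterp, ?_, ?_⟩
  · have h0 : (T - fun i => a * Real.exp (k * t i) + bm) = 0 := by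
      funext i
      simp only [Pi.sub_apply, Pi.zero_apply]
      have := hinterp i
      simp only [hE] at this
      linarith
    rw [h0, norm_zero]
  · intro a' b'
    have h0 : (T - fun i => a * Real.exp (k * t i) + bm) = 0 := by
      funext i
      simp only [Pi.sub_apply, Pi.zero_apply]
      have := hinterp i
      simp only [hE] at this
      linarith
    rw [h0, norm_zero]
    exact norm_nonneg _
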